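/- The ratio of the upper bound to the endowment converges to 1 − 1/e as the endowment goes to infinity: lim_{R→∞} l*(R)/R = 1 − 1/e. -/

import Mathlib

/-- The `n`-th harmonic number `H_n = 1 + 1/2 + ... + 1/n` (with `H_0 = 0`). -/
noncomputable def H (n : ℕ) : ℝ := ∑ k ∈ Finset.Icc 1 n, (1 : ℝ) / k

/-- `l` is the upper bound `l*` for endowment `R`:
the unique `1 ≤ l ≤ R - 1` with `H_R - H_{R-l} < 1 < H_R - H_{R-l-1}`. -/
def IsUpperBound (R l : ℕ) : Prop :=
  1 ≤ l ∧ l ≤ R - 1 ∧ H R - H (R - l) < 1 ∧ 1 < H R - H (R - l - 1)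

lemma H_succ (n : ℕ) : H (n + 1) = H n + 1 / ((n : ℝ) + 1) := by
  unfold H
  rw [Finset.sum_Icc_succ_top (by omega : 1 ≤ n + 1)]
  push_cast
  ring

lemma log_step (x : ℝ) (hx : 0 < x) : Real.log (x + 1) - Real.log x ≤ 1 / x := by
  rw [← Real.log_div (by positivity) hx.ne']
  have h := Real.log_le_sub_one_of_pos (show (0:ℝ) < (x + 1) / x by positivity)
  have h2 : (x + 1) / x - 1 = 1 / x := by field_simp; ring
  linarith

lemma log_step' (x : ℝ) (hx : 0 < x) : 1 / (x + 1) ≤ Real.log (x + 1) - Real.log x := by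
  have h := Real.log_le_sub_one_of_pos (show (0:ℝ) < x / (x + 1) by positivity)
  rw [Real.log_div hx.ne' (by positivity)] at h
  have h2 : x / (x + 1) - 1 = -(1 / (x + 1)) := by field_simp; ring
  linarith

lemma H_log_lower (m R : ℕ) (h : m ≤ R) :
    Real.log (R + 1) - Real.log (m + 1) ≤ H R - H m := by
  induction R, h using Nat.le_induction with
  | base => simp
  | succ R hmR ih =>
    have hstep := log_step ((R : ℝ) + 1) (by positivity)
    rw [H_succ]
    push_cast
    linarith

lemma H_log_upper (m R : ℕ) (hm : 1 ≤ m) (h : m ≤ R) :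
    H R - H m ≤ Real.log R - Real.log m := by
  induction R, h using Nat.le_induction with
  | base => simp
  | succ R hmR ih =>
    have hR0 : (0:ℝ) < R := by
      have : 1 ≤ R := le_trans hm hmR
      exact_mod_cast this
    have hstep := log_step' (R : ℝ) hR0
    rw [H_succ]
    push_cast
    linarith

/-- The ratio of the upper bound to the endowment converges to `1 - 1/e`. -/
theorem upper_bound_ratio_tendsto (L : ℕ → ℕ) (hL : ∀ R, 2 ≤ R → IsUpperBound R (L R)) :
    Filter.Tendsto (fun R : ℕ => (L R : ℝ) / R) Filter.atTop
      (nhds (1 - 1 / Real.exp 1)) := by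
  set e : ℝ := Real.exp 1 with he_def
  have he : (0:ℝ) < e := Real.exp_pos 1
  have h0 : Filter.Tendsto (fun R : ℕ => 1 / (R : ℝ)) Filter.atTop (nhds 0) :=
    tendsto_one_div_atTop_nhds_zero_nat
  have hg : Filter.Tendsto (fun R : ℕ => (1 - 1 / e) - 1 / (R : ℝ)) Filter.atTop
      (nhds (1 - 1 / e)) := by
    simpa using (tendsto_const_nhds.sub h0)
  have hh : Filter.Tendsto (fun R : ℕ => (1 - 1 / e) + 1 / (R : ℝ)) Filter.atTop
      (nhds (1 - 1 / e)) := by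
    simpa using (tendsto_const_nhds.add h0)
  refine tendsto_of_tendsto_of_tendsto_of_le_of_le' hg hh ?_ ?_
  · -- lower bound
    filter_upwards [Filter.eventually_atTop.2 ⟨2, fun R hR => hR⟩] with R hR2
    obtain ⟨h1, h2, h3, h4⟩ := hL R hR2
    set m : ℕ := R - L R with hm_def
    have hm1 : 1 ≤ m := by omega
    have hmR : m < R := by omega
    have hR0 : (0:ℝ) < R := by exact_mod_cast (by omega : 0 < R)
    have hLm : (L R : ℝ) = (R : ℝ) - m := by
      have : L R + m = R := by omega
      have := congrArg (fun n : ℕ => (n : ℝ)) this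
      push_cast at this
      linarith
    -- from h4 : 1 < H R - H (m - 1), get e * (m - 1) < R
    have hC : e * ((m : ℝ) - 1) < R := by
      rcases Nat.lt_or_ge m 2 with hm2 | hm2
      · have : m = 1 := by omega
        rw [this]
        simpa using hR0
      · have hub := H_log_upper (m - 1) R (by omega) (by omega)
        have hcast : ((m - 1 : ℕ) : ℝ) = (m : ℝ) - 1 := by
          push_cast [Nat.cast_sub hm1]; ring
        rw [hcast] at hub
        have h4' : 1 < Real.log R - Real.log ((m : ℝ) - 1) := by
          have : H (R - L R - 1) = H (m - 1) := by rw [hm_def]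
          linarith [h4, hub, this ▸ h4]
        have hm1' : (0:ℝ) < (m : ℝ) - 1 := by
          have : (2:ℝ) ≤ m := by exact_mod_cast hm2
          linarith
        rw [← Real.log_div hR0.ne' hm1'.ne'] at h4'
        have hx : (0:ℝ) < (R : ℝ) / ((m : ℝ) - 1) := by positivity
        have : e < (R : ℝ) / ((m : ℝ) - 1) := by
          have := Real.exp_lt_exp.mpr h4'
          rwa [Real.exp_log hx] at this
        rw [lt_div_iff₀ hm1'] at this
        linarith [this]
    -- conclude lower bound
    rw [hLm]
    rw [le_div_iff₀ hR0]
    have hinv : (1 / (R:ℝ)) * R = 1 := one_div_mul_cancel hR0.ne'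
    have hinv2 : (1 / e) * e = 1 := one_div_mul_cancel he.ne'
    nlinarith [hC, mul_pos (one_div_pos.mpr he) hR0]
  · -- upper bound
    filter_upwards [Filter.eventually_atTop.2 ⟨2, fun R hR => hR⟩] with R hR2
    obtain ⟨h1, h2, h3, h4⟩ := hL R hR2
    set m : ℕ := R - L R with hm_def
    have hm1 : 1 ≤ m := by omega
    have hmR : m < R := by omega
    have hR0 : (0:ℝ) < R := by exact_mod_cast (by omega : 0 < R)
    have hLm : (L R : ℝ) = (R : ℝ) - m := by
      have : L R + m = R := by omega
      have := congrArg (fun n : ℕ => (n : ℝ)) this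
      push_cast at this
      linarith
    -- from h3 : H R - H m < 1, get R + 1 < e * (m + 1)
    have hB : (R : ℝ) + 1 < e * ((m : ℝ) + 1) := by
      have hlb := H_log_lower m R (le_of_lt hmR)
      have h3' : Real.log ((R:ℝ) + 1) - Real.log ((m:ℝ) + 1) < 1 := by
        have hH : H (R - L R) = H m := by rw [hm_def]
        linarith [hlb, hH ▸ h3]
      have hm0 : (0:ℝ) < (m : ℝ) + 1 := by positivity
      rw [← Real.log_div (by positivity) hm0.ne'] at h3'
      have hx : (0:ℝ) < ((R:ℝ) + 1) / ((m:ℝ) + 1) := by positivity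
      have : ((R:ℝ) + 1) / ((m:ℝ) + 1) < e := by
        have := Real.exp_lt_exp.mpr h3'
        rwa [Real.exp_log hx] at this
      rw [div_lt_iff₀ hm0] at this
      linarith [this]
    -- conclude upper bound
    rw [hLm]
    rw [div_le_iff₀ hR0]
    have hinv : (1 / (R:ℝ)) * R = 1 := one_div_mul_cancel hR0.ne'
    have hinv2 : (1 / e) * e = 1 := one_div_mul_cancel he.ne'
    nlinarith [hB, mul_pos (one_div_pos.mpr he) hR0]
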